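/- Let H be a positive semidefinite Hamiltonian on X with 0-eigenspace S, such that all nonzero eigenvalues of H are at least Δ > 0. Let Π be the projection onto S and ρ a density operator with Tr(Hρ) ≤ ε. Then the trace distance between ρ and ρ_Π = ΠρΠ/Tr(Πρ) is at most O(√(ε/Δ)). -/

import Mathlib

open Matrix ComplexOrder

/-- The trace norm of a matrix: the trace of `√(AᴴA)`. -/
noncomputable def traceNorm {m : Type*} [Fintype m] [DecidableEq m]
    (A : Matrix m m ℂ) : ℝ :=
  (((Matrix.posSemidef_conjTranspose_mul_self A).1.eigenvectorUnitary : Matrix m m ℂ) *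
      diagonal (((↑) : ℝ → ℂ) ∘ (√·) ∘ (Matrix.posSemidef_conjTranspose_mul_self A).1.eigenvalues) *
      (star (Matrix.posSemidef_conjTranspose_mul_self A).1.eigenvectorUnitary : Matrix m m ℂ)).trace.re

/-- The trace distance between two matrices. -/
noncomputable def traceDist {m : Type*} [Fintype m] [DecidableEq m]
    (ρ σ : Matrix m m ℂ) : ℝ :=
  traceNorm (ρ - σ) / 2

set_option linter.unusedSectionVars false
set_option maxHeartbeats 1000000

variable {m : Type*} [Fintype m] [DecidableEq m]

section SqrtPort
open scoped MatrixOrder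

noncomputable def Matrix.PosSemidef.sqrt {A : Matrix m m ℂ} (hA : A.PosSemidef) :
    Matrix m m ℂ :=
  (hA.1.eigenvectorUnitary : Matrix m m ℂ) *
      diagonal (((↑) : ℝ → ℂ) ∘ (√·) ∘ hA.1.eigenvalues) *
      (star hA.1.eigenvectorUnitary : Matrix m m ℂ)

lemma Matrix.PosSemidef.sqrt_eq_cfc {A : Matrix m m ℂ} (hA : A.PosSemidef) :
    hA.sqrt = CFC.sqrt A := by
  rw [CFC.sqrt_eq_real_sqrt A (nonneg_iff_posSemidef.mpr hA), cfcₙ_eq_cfc (hf0 := by simp),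
    hA.1.cfc_eq, IsHermitian.cfc, Unitary.conjStarAlgAut_apply]
  rfl

lemma Matrix.PosSemidef.posSemidef_sqrt {A : Matrix m m ℂ} (hA : A.PosSemidef) :
    hA.sqrt.PosSemidef := by
  rw [hA.sqrt_eq_cfc]
  exact nonneg_iff_posSemidef.mp (CFC.sqrt_nonneg A)

lemma Matrix.PosSemidef.sqrt_mul_self {A : Matrix m m ℂ} (hA : A.PosSemidef) :
    hA.sqrt * hA.sqrt = A := by
  rw [hA.sqrt_eq_cfc]
  exact CFC.sqrt_mul_sqrt_self A (nonneg_iff_posSemidef.mpr hA)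

lemma Matrix.PosSemidef.eq_sqrt_of_sq_eq {A B : Matrix m m ℂ} (hB : B.PosSemidef)
    (hA : A.PosSemidef) (h : B ^ 2 = A) : B = hA.sqrt := by
  rw [hA.sqrt_eq_cfc, ← h, CFC.sqrt_sq B (nonneg_iff_posSemidef.mpr hB)]

end SqrtPort

lemma rc_ofReal : (RCLike.ofReal : ℝ → ℂ) = Complex.ofReal := rfl

lemma traceNorm_eq_of_sq_eq {A B : Matrix m m ℂ} (hB : B.PosSemidef)
    (h : B ^ 2 = Aᴴ * A) : traceNorm A = B.trace.re := by
  rw [show traceNorm A = (Matrix.posSemidef_conjTranspose_mul_self A).sqrt.trace.re from rfl,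
    ← hB.eq_sqrt_of_sq_eq (Matrix.posSemidef_conjTranspose_mul_self A) h]

lemma traceNorm_of_posSemidef {A : Matrix m m ℂ} (hA : A.PosSemidef) :
    traceNorm A = A.trace.re := by
  refine traceNorm_eq_of_sq_eq hA ?_
  rw [pow_two, hA.1.eq]

lemma traceNorm_smul_real {A : Matrix m m ℂ} (hA : A.PosSemidef) (c : ℝ) :
    traceNorm ((c : ℂ) • A) = |c| * A.trace.re := by
  have hB : (((|c| : ℝ) : ℂ) • A).PosSemidef := by
    refine ⟨?_, ?_⟩
    · rw [Matrix.IsHermitian, Matrix.conjTranspose_smul, hA.1.eq]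
      congr 1
      simp
    · exact (hA.smul (a := ((|c| : ℝ) : ℂ)) (by rw [Complex.zero_le_real]; positivity)).2
  have h : (((|c| : ℝ) : ℂ) • A) ^ 2 = ((c : ℂ) • A)ᴴ * ((c : ℂ) • A) := by
    rw [Matrix.conjTranspose_smul, hA.1.eq, pow_two, Matrix.smul_mul, Matrix.mul_smul,
      smul_smul, Matrix.smul_mul, Matrix.mul_smul, smul_smul]
    congr 1
    rw [Complex.star_def, Complex.conj_ofReal, ← Complex.ofReal_mul, ← Complex.ofReal_mul,
      abs_mul_abs_self]
  rw [traceNorm_eq_of_sq_eq hB h, Matrix.trace_smul]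
  simp [Complex.re_ofReal_mul]

lemma unitary_entry_abs_le_one {W : Matrix m m ℂ} (hW : W ∈ Matrix.unitaryGroup m ℂ)
    (i j : m) : ‖W i j‖ ≤ 1 := by
  have h1 : W * Wᴴ = 1 := by
    rw [← Matrix.star_eq_conjTranspose]
    exact (Matrix.mem_unitaryGroup_iff).mp hW
  have h2 : ((W * Wᴴ) i i).re = 1 := by rw [h1]; simp
  have h3 : ∑ k, Complex.normSq (W i k) = 1 := by
    rw [← h2]
    simp [Matrix.mul_apply, Matrix.conjTranspose_apply, Complex.mul_conj, Complex.re_sum]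
  have h4 : Complex.normSq (W i j) ≤ 1 := by
    rw [← h3]
    exact Finset.single_le_sum (fun k _ => Complex.normSq_nonneg _) (Finset.mem_univ j)
  rw [← Complex.sq_norm] at h4
  nlinarith [norm_nonneg (W i j)]

lemma traceNorm_hermitian {A : Matrix m m ℂ} (hA : A.IsHermitian) :
    traceNorm A = ∑ i, |hA.eigenvalues i| := by
  set U : Matrix m m ℂ := (hA.eigenvectorUnitary : Matrix m m ℂ) with hU
  have hUU : U * star U = 1 := (Matrix.mem_unitaryGroup_iff).mp hA.eigenvectorUnitary.2
  have hUU' : star U * U = 1 := (Matrix.mem_unitaryGroup_iff').mp hA.eigenvectorUnitary.2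
  set D : Matrix m m ℂ := Matrix.diagonal (fun i => ((|hA.eigenvalues i| : ℝ) : ℂ)) with hD
  have hDpsd : D.PosSemidef := Matrix.posSemidef_diagonal_iff.mpr
    (fun i => by rw [Complex.zero_le_real]; positivity)
  have hB : (U * D * star U).PosSemidef := by
    have := hDpsd.mul_mul_conjTranspose_same U
    rwa [Matrix.star_eq_conjTranspose]
  have hsq : (U * D * star U) ^ 2 = Aᴴ * A := by
    rw [hA.eq]
    conv_rhs => rw [hA.spectral_theorem, Unitary.conjStarAlgAut_apply]
    rw [pow_two]
    calc U * D * star U * (U * D * star U)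
        = U * (D * (star U * U) * D) * star U := by noncomm_ring
      _ = U * (D * D) * star U := by rw [hUU', Matrix.mul_one]
      _ = _ := by
          rw [show U * Matrix.diagonal (RCLike.ofReal ∘ hA.eigenvalues) * star U *
              (U * Matrix.diagonal (RCLike.ofReal ∘ hA.eigenvalues) * star U) =
              U * (Matrix.diagonal (RCLike.ofReal ∘ hA.eigenvalues) * (star U * U) *
              Matrix.diagonal (RCLike.ofReal ∘ hA.eigenvalues)) * star U from by noncomm_ring,
            hUU', Matrix.mul_one]
          have hfun : (fun i => ((|hA.eigenvalues i| : ℝ) : ℂ) * ((|hA.eigenvalues i| : ℝ) : ℂ))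
              = fun i => (RCLike.ofReal ∘ hA.eigenvalues) i * (RCLike.ofReal ∘ hA.eigenvalues) i := by
            funext i
            simp only [Function.comp_apply, rc_ofReal]
            rw [← Complex.ofReal_mul, ← Complex.ofReal_mul, abs_mul_abs_self]
          rw [hD, Matrix.diagonal_mul_diagonal, Matrix.diagonal_mul_diagonal, hfun]
  rw [traceNorm_eq_of_sq_eq hB hsq]
  rw [Matrix.trace_mul_cycle, hUU', Matrix.one_mul, hD, Matrix.trace_diagonal]
  rw [show ∑ i, ((|hA.eigenvalues i| : ℝ) : ℂ)
    = ((∑ i, |hA.eigenvalues i| : ℝ) : ℂ) from by push_cast; ring]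
  exact Complex.ofReal_re _

lemma trace_unitary_mul_re_le {A : Matrix m m ℂ} (hA : A.IsHermitian)
    {W : Matrix m m ℂ} (hW : W ∈ Matrix.unitaryGroup m ℂ) :
    ((W * A).trace).re ≤ traceNorm A := by
  rw [traceNorm_hermitian hA]
  set U : Matrix m m ℂ := (hA.eigenvectorUnitary : Matrix m m ℂ) with hU
  set M : Matrix m m ℂ := star U * W * U with hM
  have hMmem : M ∈ Matrix.unitaryGroup m ℂ :=
    mul_mem (mul_mem (Unitary.star_mem hA.eigenvectorUnitary.2) hW) hA.eigenvectorUnitary.2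
  have h1 : (W * A).trace = (M * Matrix.diagonal (RCLike.ofReal ∘ hA.eigenvalues)).trace := by
    conv_lhs => rw [hA.spectral_theorem, Unitary.conjStarAlgAut_apply]
    rw [show W * ((hA.eigenvectorUnitary : Matrix m m ℂ) *
        Matrix.diagonal (RCLike.ofReal ∘ hA.eigenvalues) *
        (star (hA.eigenvectorUnitary : Matrix m m ℂ))) =
      (W * U) * Matrix.diagonal (RCLike.ofReal ∘ hA.eigenvalues) * star U from by
        rw [← hU]; noncomm_ring]
    rw [Matrix.trace_mul_cycle, hM]
    noncomm_ring
  rw [h1]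
  have h2 : (M * Matrix.diagonal (RCLike.ofReal ∘ hA.eigenvalues)).trace
      = ∑ i, M i i * ((hA.eigenvalues i : ℝ) : ℂ) := by
    simp [Matrix.trace, Matrix.diag, Matrix.mul_diagonal, rc_ofReal]
  rw [h2, Complex.re_sum]
  refine Finset.sum_le_sum fun i _ => ?_
  have hb : (M i i * ((hA.eigenvalues i : ℝ) : ℂ)).re
      ≤ ‖M i i‖ * |hA.eigenvalues i| := by
    refine (Complex.re_le_norm _).trans ?_
    rw [norm_mul]
    simp [Complex.norm_real]
  refine hb.trans ?_
  have := unitary_entry_abs_le_one hMmem i i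
  nlinarith [norm_nonneg (M i i), abs_nonneg (hA.eigenvalues i)]

lemma exists_unitary_trace_eq {A : Matrix m m ℂ} (hA : A.IsHermitian) :
    ∃ W ∈ Matrix.unitaryGroup m ℂ, ((W * A).trace).re = traceNorm A := by
  set U : Matrix m m ℂ := (hA.eigenvectorUnitary : Matrix m m ℂ) with hU
  have hUU : U * star U = 1 := (Matrix.mem_unitaryGroup_iff).mp hA.eigenvectorUnitary.2
  have hUU' : star U * U = 1 := (Matrix.mem_unitaryGroup_iff').mp hA.eigenvectorUnitary.2
  set s : m → ℂ := fun i => if hA.eigenvalues i < 0 then (-1 : ℂ) else 1 with hs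
  have hss : ∀ i, s i * star (s i) = 1 := by
    intro i
    rw [hs]
    by_cases h : hA.eigenvalues i < 0 <;> simp [h]
  have hd1 : Matrix.diagonal s * star (Matrix.diagonal s) = 1 := by
    rw [Matrix.star_eq_conjTranspose, Matrix.diagonal_conjTranspose,
      Matrix.diagonal_mul_diagonal]
    rw [show (fun i => s i * star s i) = fun _ => (1 : ℂ) from funext fun i => by
      rw [Pi.star_apply]; exact hss i]
    exact Matrix.diagonal_one
  refine ⟨U * Matrix.diagonal s * star U, ?_, ?_⟩
  · rw [Matrix.mem_unitaryGroup_iff]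
    calc U * Matrix.diagonal s * star U * star (U * Matrix.diagonal s * star U)
        = U * (Matrix.diagonal s * (star U * U) * star (Matrix.diagonal s)) * star U := by
          simp only [StarMul.star_mul, star_star]
          noncomm_ring
      _ = 1 := by rw [hUU', Matrix.mul_one, hd1, Matrix.mul_one, hUU]
  · have h1 : (U * Matrix.diagonal s * star U * A).trace
        = (Matrix.diagonal s * Matrix.diagonal (RCLike.ofReal ∘ hA.eigenvalues)).trace := by
      conv_lhs => rw [hA.spectral_theorem, Unitary.conjStarAlgAut_apply]
      rw [show U * Matrix.diagonal s * star U * ((hA.eigenvectorUnitary : Matrix m m ℂ) *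
          Matrix.diagonal (RCLike.ofReal ∘ hA.eigenvalues) *
          (star (hA.eigenvectorUnitary : Matrix m m ℂ))) =
          U * (Matrix.diagonal s * (star U * U) *
          Matrix.diagonal (RCLike.ofReal ∘ hA.eigenvalues)) * star U from by
            rw [← hU]; noncomm_ring, hUU', Matrix.mul_one]
      rw [Matrix.trace_mul_cycle, ← Matrix.mul_assoc, hUU', Matrix.one_mul]
    rw [h1, Matrix.diagonal_mul_diagonal, Matrix.trace_diagonal, traceNorm_hermitian hA]
    rw [Complex.re_sum]
    refine Finset.sum_congr rfl fun i _ => ?_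
    rw [hs]
    simp only [Function.comp_apply, rc_ofReal]
    by_cases h : hA.eigenvalues i < 0
    · simp only [h, if_true]
      rw [show (-1 : ℂ) * (hA.eigenvalues i : ℂ) = ((-hA.eigenvalues i : ℝ) : ℂ) from by
        push_cast; ring]
      rw [Complex.ofReal_re, abs_of_neg h]
    · simp only [h, if_false]
      rw [one_mul, Complex.ofReal_re, abs_of_nonneg (not_lt.mp h)]

lemma traceNorm_add_le_of_hermitian {A B : Matrix m m ℂ} (hA : A.IsHermitian)
    (hB : B.IsHermitian) : traceNorm (A + B) ≤ traceNorm A + traceNorm B := by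
  obtain ⟨W, hW, hWtr⟩ := exists_unitary_trace_eq (hA.add hB)
  rw [← hWtr, Matrix.mul_add, Matrix.trace_add, Complex.add_re]
  exact add_le_add (trace_unitary_mul_re_le hA hW) (trace_unitary_mul_re_le hB hW)



namespace TN

variable {m : Type*} [Fintype m] [DecidableEq m]

lemma trace_re_nonneg {A : Matrix m m ℂ} (hA : A.PosSemidef) : 0 ≤ A.trace.re := by
  have h : ∀ i, 0 ≤ (A i i).re := by
    intro i
    simpa using (Complex.le_def.mp (hA.diag_nonneg (i := i))).1
  rw [Matrix.trace]
  rw [Complex.re_sum]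
  exact Finset.sum_nonneg fun i _ => h i

lemma trace_mul_re_nonneg {A B : Matrix m m ℂ} (hA : A.PosSemidef) (hB : B.PosSemidef) :
    0 ≤ ((A * B).trace).re := by
  have h1 : (A * B).trace = (hA.sqrt * B * hA.sqrt).trace := by
    conv_lhs => rw [show A = hA.sqrt * hA.sqrt from hA.sqrt_mul_self.symm]
    rw [Matrix.mul_assoc, Matrix.trace_mul_comm, Matrix.mul_assoc]
  rw [h1]
  refine trace_re_nonneg ?_
  have := hB.mul_mul_conjTranspose_same hA.sqrt
  rwa [hA.posSemidef_sqrt.1.eq] at this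

lemma hermitian_trace_eq_re {A : Matrix m m ℂ} (hA : A.IsHermitian) :
    A.trace = (A.trace.re : ℂ) := by
  have := Matrix.trace_conjTranspose A
  rw [hA.eq] at this
  exact ((Complex.conj_eq_iff_re).mp this.symm).symm

end TN

variable {m : Type*} [Fintype m] [DecidableEq m]

lemma trace_mul_conjTranspose_re (M : Matrix m m ℂ) :
    ((M * Mᴴ).trace).re = ∑ i, ∑ j, ‖M i j‖ ^ 2 := by
  have h : (M * Mᴴ).trace = ((∑ i, ∑ j, Complex.normSq (M i j) : ℝ) : ℂ) := by
    push_cast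
    simp [Matrix.trace, Matrix.diag, Matrix.mul_apply, Matrix.conjTranspose_apply,
      Complex.mul_conj]
  rw [h, Complex.ofReal_re]
  simp [Complex.sq_norm]

lemma trace_conjTranspose_mul_re (N : Matrix m m ℂ) :
    ((Nᴴ * N).trace).re = ∑ i, ∑ j, ‖N j i‖ ^ 2 := by
  have h : (Nᴴ * N).trace = ((∑ i, ∑ j, Complex.normSq (N j i) : ℝ) : ℂ) := by
    push_cast
    simp [Matrix.trace, Matrix.diag, Matrix.mul_apply, Matrix.conjTranspose_apply,
      mul_comm, Complex.mul_conj]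
  rw [h, Complex.ofReal_re]
  simp [Complex.sq_norm]

lemma trace_mul_re_le_cs (M N : Matrix m m ℂ) :
    ((M * N).trace).re ≤ Real.sqrt (((M * Mᴴ).trace).re) * Real.sqrt (((Nᴴ * N).trace).re) := by
  have h1 : ((M * N).trace).re ≤ ∑ p : m × m, ‖M p.1 p.2‖ * ‖N p.2 p.1‖ := by
    have e : (M * N).trace = ∑ p : m × m, M p.1 p.2 * N p.2 p.1 := by
      rw [Fintype.sum_prod_type]
      simp [Matrix.trace, Matrix.diag, Matrix.mul_apply]
    rw [e]
    refine (Complex.re_le_norm _).trans ?_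
    refine (norm_sum_le _ _).trans ?_
    simp [norm_mul, le_refl]
  refine h1.trans ?_
  have h2 := Real.sum_mul_le_sqrt_mul_sqrt (Finset.univ : Finset (m × m))
    (fun p => ‖M p.1 p.2‖) (fun p => ‖N p.2 p.1‖)
  rw [trace_mul_conjTranspose_re, trace_conjTranspose_mul_re]
  have eM : ∑ p : m × m, ‖M p.1 p.2‖ ^ 2 = ∑ i, ∑ j, ‖M i j‖ ^ 2 :=
    Fintype.sum_prod_type _
  have eN : ∑ p : m × m, ‖N p.2 p.1‖ ^ 2 = ∑ i, ∑ j, ‖N j i‖ ^ 2 :=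
    Fintype.sum_prod_type _
  rw [← eM, ← eN]
  exact h2

lemma eq_zero_of_trace_mul_conjTranspose_re {M : Matrix m m ℂ}
    (h : ((M * Mᴴ).trace).re = 0) : M = 0 := by
  rw [trace_mul_conjTranspose_re] at h
  ext i j
  have := (Finset.sum_eq_zero_iff_of_nonneg (fun i _ => Finset.sum_nonneg
    (fun j _ => sq_nonneg ‖M i j‖))).mp h i (Finset.mem_univ i)
  have := (Finset.sum_eq_zero_iff_of_nonneg (fun j _ => sq_nonneg ‖M i j‖)).mp
    this j (Finset.mem_univ j)
  simpa [pow_eq_zero_iff] using this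

/-- If `H ⪰ 0` has `0`-eigenspace with projection `P`, all nonzero eigenvalues at least
`Δ` (i.e. `H ⪰ Δ(I − P)`), and `Tr(Hρ) ≤ ε` for a density operator `ρ`, then `ρ` is
within trace distance `O(√(ε/Δ))` of `PρP/Tr(Pρ)`. -/
theorem gapped_hamiltonian_close_to_ground :
    ∃ C : ℝ, 0 < C ∧
      ∀ (n : ℕ) (H P ρ : Matrix (Fin n) (Fin n) ℂ) (ε Δ : ℝ),
        H.PosSemidef →
        P * P = P → P.IsHermitian → H * P = 0 →
        0 < Δ →
        (H - (Δ : ℂ) • ((1 : Matrix (Fin n) (Fin n) ℂ) - P)).PosSemidef →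
        ρ.PosSemidef → ρ.trace = 1 →
        ((H * ρ).trace).re ≤ ε →
        traceDist ρ (((P * ρ).trace)⁻¹ • (P * ρ * P)) ≤ C * Real.sqrt (ε / Δ) := by
  refine ⟨2, by norm_num, ?_⟩
  intro n H P ρ ε Δ hH hP2 hPH hHP hΔ hgap hρ hρtr hε
  have hPpsd : P.PosSemidef := by
    have h : Pᴴ * P = P := by rw [hPH.eq, hP2]
    exact h ▸ Matrix.posSemidef_conjTranspose_mul_self P
  set Q : Matrix (Fin n) (Fin n) ℂ := 1 - P with hQdef
  have hQH : Q.IsHermitian := Matrix.isHermitian_one.sub hPH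
  have hQ2 : Q * Q = Q := by
    rw [hQdef]
    simp only [Matrix.sub_mul, Matrix.mul_sub, Matrix.mul_one, Matrix.one_mul, hP2]
    abel
  have hQpsd : Q.PosSemidef := by
    have h : Qᴴ * Q = Q := by rw [hQH.eq, hQ2]
    exact h ▸ Matrix.posSemidef_conjTranspose_mul_self Q
  set s : Matrix (Fin n) (Fin n) ℂ := hρ.sqrt with hsdef
  have hspsd : s.PosSemidef := hρ.posSemidef_sqrt
  have hsH : s.IsHermitian := hspsd.1
  have hss : s * s = ρ := hρ.sqrt_mul_self
  set p : ℝ := ((P * ρ).trace).re with hpdef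
  set δ : ℝ := ((Q * ρ).trace).re with hδdef
  have hPρP : (P * ρ * P).PosSemidef := by
    have := hρ.mul_mul_conjTranspose_same P
    rwa [hPH.eq] at this
  have hQρQ : (Q * ρ * Q).PosSemidef := by
    have := hρ.mul_mul_conjTranspose_same Q
    rwa [hQH.eq] at this
  have htrPcyc : (P * ρ * P).trace = (P * ρ).trace := by
    rw [Matrix.trace_mul_cycle P ρ P, hP2]
  have htrQcyc : (Q * ρ * Q).trace = (Q * ρ).trace := by
    rw [Matrix.trace_mul_cycle Q ρ Q, hQ2]
  have htrP : (P * ρ).trace = (p : ℂ) := by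
    rw [← htrPcyc, TN.hermitian_trace_eq_re hPρP.1, htrPcyc, ← hpdef]
  have hp0 : 0 ≤ p := TN.trace_mul_re_nonneg hPpsd hρ
  have hδ0 : 0 ≤ δ := TN.trace_mul_re_nonneg hQpsd hρ
  have hδp : δ = 1 - p := by
    have h : Q * ρ = ρ - P * ρ := by rw [hQdef, Matrix.sub_mul, Matrix.one_mul]
    rw [hδdef, h, Matrix.trace_sub, hρtr, Complex.sub_re, Complex.one_re, hpdef]
  have hδ1 : δ ≤ 1 := by linarith
  have hgap' : Δ * δ ≤ ε := by
    have h0 : 0 ≤ (((H - (Δ : ℂ) • Q) * ρ).trace).re := TN.trace_mul_re_nonneg hgap hρ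
    have hexp : (H - (Δ : ℂ) • Q) * ρ = H * ρ - (Δ : ℂ) • (Q * ρ) := by
      rw [Matrix.sub_mul, Matrix.smul_mul]
    rw [hexp, Matrix.trace_sub, Matrix.trace_smul, Complex.sub_re, smul_eq_mul,
      Complex.re_ofReal_mul] at h0
    have hd : ((Q * ρ).trace).re = δ := hδdef.symm
    rw [hd] at h0
    linarith
  have hδle : δ ≤ ε / Δ := by
    rw [le_div_iff₀ hΔ]
    linarith [mul_comm Δ δ]
  have hsq : Real.sqrt δ ≤ Real.sqrt (ε / Δ) := Real.sqrt_le_sqrt hδle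
  have hδsqrt : δ ≤ Real.sqrt δ := by
    nlinarith [Real.sq_sqrt hδ0, Real.sqrt_nonneg δ]
  suffices key : traceNorm (ρ - ((P * ρ).trace)⁻¹ • (P * ρ * P)) ≤ 4 * Real.sqrt δ by
    have : traceDist ρ (((P * ρ).trace)⁻¹ • (P * ρ * P))
        = traceNorm (ρ - ((P * ρ).trace)⁻¹ • (P * ρ * P)) / 2 := rfl
    rw [this]
    linarith
  by_cases hp : p = 0
  · have hPs : P * s = 0 := by
      apply eq_zero_of_trace_mul_conjTranspose_re
      have hid : (P * s) * (P * s)ᴴ = P * ρ * P := by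
        rw [Matrix.conjTranspose_mul, hsH.eq, hPH.eq, ← hss]
        noncomm_ring
      rw [hid, htrPcyc, htrP, hp]
      simp
    have hPρ : P * ρ = 0 := by rw [← hss, ← Matrix.mul_assoc, hPs, Matrix.zero_mul]
    rw [hPρ]
    simp only [Matrix.zero_mul, Matrix.trace_zero, smul_zero, sub_zero]
    rw [traceNorm_of_posSemidef hρ, hρtr]
    have hδ1' : δ = 1 := by rw [hδp, hp]; ring
    rw [hδ1', Real.sqrt_one]
    norm_num
  · have hppos : 0 < p := lt_of_le_of_ne hp0 (Ne.symm hp)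
    have hp1 : p ≤ 1 := by linarith
    have hdecomp : ρ - ((P * ρ).trace)⁻¹ • (P * ρ * P)
        = (Q * ρ * Q) + ((Q * ρ * P + P * ρ * Q)
          + (((1 - p⁻¹ : ℝ) : ℂ) • (P * ρ * P))) := by
      rw [htrP, ← Complex.ofReal_inv]
      have hkey : (Q * ρ * Q) + ((Q * ρ * P + P * ρ * Q) + P * ρ * P) = ρ := by
        rw [hQdef]; noncomm_ring
      have hC : ((1 - p⁻¹ : ℝ) : ℂ) = 1 - ((p⁻¹ : ℝ) : ℂ) := by push_cast; ring
      rw [hC, sub_smul, one_smul]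
      rw [show (Q * ρ * Q) + ((Q * ρ * P + P * ρ * Q)
          + (P * ρ * P - ((p⁻¹ : ℝ) : ℂ) • (P * ρ * P)))
          = ((Q * ρ * Q) + ((Q * ρ * P + P * ρ * Q) + P * ρ * P))
            - ((p⁻¹ : ℝ) : ℂ) • (P * ρ * P) from by abel]
      rw [hkey]
    rw [hdecomp]
    have h1 : (Q * ρ * P)ᴴ = P * ρ * Q := by
      rw [Matrix.conjTranspose_mul, Matrix.conjTranspose_mul, hPH.eq, hQH.eq, hρ.1.eq,
        ← Matrix.mul_assoc]
    have h2 : (P * ρ * Q)ᴴ = Q * ρ * P := by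
      rw [Matrix.conjTranspose_mul, Matrix.conjTranspose_mul, hPH.eq, hQH.eq, hρ.1.eq,
        ← Matrix.mul_assoc]
    have hCmH : (Q * ρ * P + P * ρ * Q).IsHermitian := by
      rw [Matrix.IsHermitian, Matrix.conjTranspose_add, h1, h2]
      abel
    have hRH : (((1 - p⁻¹ : ℝ) : ℂ) • (P * ρ * P)).IsHermitian := by
      rw [Matrix.IsHermitian, Matrix.conjTranspose_smul, hPρP.1.eq]
      congr 1
      simp [Complex.star_def, Complex.conj_ofReal]
    have htri : traceNorm ((Q * ρ * Q) + ((Q * ρ * P + P * ρ * Q)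
          + (((1 - p⁻¹ : ℝ) : ℂ) • (P * ρ * P))))
        ≤ traceNorm (Q * ρ * Q) + (traceNorm (Q * ρ * P + P * ρ * Q)
          + traceNorm (((1 - p⁻¹ : ℝ) : ℂ) • (P * ρ * P))) := by
      refine (traceNorm_add_le_of_hermitian hQρQ.1 (hCmH.add hRH)).trans ?_
      exact add_le_add le_rfl (traceNorm_add_le_of_hermitian hCmH hRH)
    refine htri.trans ?_
    have hDval : traceNorm (Q * ρ * Q) = δ := by
      rw [traceNorm_of_posSemidef hQρQ, htrQcyc, ← hδdef]
    have hRval : traceNorm (((1 - p⁻¹ : ℝ) : ℂ) • (P * ρ * P)) = δ := by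
      rw [traceNorm_smul_real hPρP, htrPcyc, htrP, Complex.ofReal_re]
      have hinv : p⁻¹ * p = 1 := inv_mul_cancel₀ (ne_of_gt hppos)
      have hinv1 : 1 ≤ p⁻¹ := by nlinarith
      rw [abs_of_nonpos (by linarith), hδp]
      nlinarith
    -- the cross term
    have hstr : ((sᴴ * s).trace).re = 1 := by
      rw [hsH.eq, hss, hρtr]
      simp
    obtain ⟨W, hWmem, hWtr⟩ := exists_unitary_trace_eq hCmH
    have hWW' : Wᴴ * W = 1 := by
      rw [← Matrix.star_eq_conjTranspose]
      exact (Matrix.mem_unitaryGroup_iff').mp hWmem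
    have hWW : W * Wᴴ = 1 := by
      rw [← Matrix.star_eq_conjTranspose]
      exact (Matrix.mem_unitaryGroup_iff).mp hWmem
    have hYbound : ∀ V : Matrix (Fin n) (Fin n) ℂ, Vᴴ * V = 1 →
        ((P * ((V * Q * s) * (V * Q * s)ᴴ) * P).trace).re ≤ δ := by
      intro V hV
      have hZps : ((V * Q * s) * (V * Q * s)ᴴ).PosSemidef := by
        have := Matrix.posSemidef_conjTranspose_mul_self ((V * Q * s)ᴴ)
        rwa [Matrix.conjTranspose_conjTranspose] at this
      have e0 : (P * ((V * Q * s) * (V * Q * s)ᴴ) * P).trace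
          = (P * ((V * Q * s) * (V * Q * s)ᴴ)).trace := by
        rw [Matrix.trace_mul_cycle, hP2]
      have hsplit : (((V * Q * s) * (V * Q * s)ᴴ).trace)
          = (P * ((V * Q * s) * (V * Q * s)ᴴ)).trace
            + (Q * ((V * Q * s) * (V * Q * s)ᴴ)).trace := by
        rw [← Matrix.trace_add, ← Matrix.add_mul]
        congr 1
        rw [hQdef]
        noncomm_ring
      have h0 : 0 ≤ ((Q * ((V * Q * s) * (V * Q * s)ᴴ)).trace).re :=
        TN.trace_mul_re_nonneg hQpsd hZps
      have htot : (((V * Q * s) * (V * Q * s)ᴴ).trace).re = δ := by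
        rw [Matrix.trace_mul_comm]
        have hYY : (V * Q * s)ᴴ * (V * Q * s) = s * Q * s := by
          have hA1 : (V * Q * s)ᴴ * (V * Q * s) = s * (Q * ((Vᴴ * V) * (Q * s))) := by
            simp only [Matrix.conjTranspose_mul, hQH.eq, hsH.eq]
            noncomm_ring
          rw [hA1, hV, Matrix.one_mul]
          rw [show s * (Q * (Q * s)) = s * (Q * Q) * s from by noncomm_ring, hQ2]
        rw [hYY, Matrix.trace_mul_cycle s Q s, hss, Matrix.trace_mul_comm]
      rw [e0]
      have hres := congrArg Complex.re hsplit
      rw [Complex.add_re] at hres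
      linarith
    have hterm1 : ((W * (Q * ρ * P)).trace).re ≤ Real.sqrt δ := by
      have e1 : (W * (Q * ρ * P)).trace = ((P * W * Q * s) * s).trace := by
        rw [← hss]
        rw [show W * (Q * (s * s) * P) = (W * Q * s) * (s * P) from by noncomm_ring]
        rw [Matrix.trace_mul_comm]
        rw [show (s * P) * (W * Q * s) = s * (P * W * Q * s) from by noncomm_ring]
        rw [Matrix.trace_mul_comm]
      rw [e1]
      have hcs := trace_mul_re_le_cs (P * W * Q * s) s
      rw [hstr, Real.sqrt_one, mul_one] at hcs
      refine hcs.trans (Real.sqrt_le_sqrt ?_)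
      have eM : (P * W * Q * s) * (P * W * Q * s)ᴴ
          = P * ((W * Q * s) * (W * Q * s)ᴴ) * P := by
        simp only [Matrix.conjTranspose_mul, hPH.eq, hQH.eq, hsH.eq]
        noncomm_ring
      rw [eM]
      exact hYbound W hWW'
    have hterm2 : ((W * (P * ρ * Q)).trace).re ≤ Real.sqrt δ := by
      have e2 : (W * (P * ρ * Q)).trace = ((s * Q * W * P) * s).trace := by
        rw [← hss]
        rw [show W * (P * (s * s) * Q) = (W * P * s) * (s * Q) from by noncomm_ring]
        rw [Matrix.trace_mul_comm]
        rw [show (s * Q) * (W * P * s) = (s * Q * W * P) * s from by noncomm_ring]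
      rw [e2]
      have hcs := trace_mul_re_le_cs (s * Q * W * P) s
      rw [hstr, Real.sqrt_one, mul_one] at hcs
      refine hcs.trans (Real.sqrt_le_sqrt ?_)
      have eM : ((s * Q * W * P) * (s * Q * W * P)ᴴ).trace
          = (P * ((Wᴴ * Q * s) * (Wᴴ * Q * s)ᴴ) * P).trace := by
        rw [Matrix.trace_mul_comm]
        congr 1
        simp only [Matrix.conjTranspose_mul, Matrix.conjTranspose_conjTranspose,
          hPH.eq, hQH.eq, hsH.eq]
        noncomm_ring
      rw [eM]
      refine hYbound Wᴴ ?_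
      rw [Matrix.conjTranspose_conjTranspose]
      exact hWW
    have hCmval : traceNorm (Q * ρ * P + P * ρ * Q) ≤ 2 * Real.sqrt δ := by
      rw [← hWtr, Matrix.mul_add, Matrix.trace_add, Complex.add_re]
      linarith
    rw [hDval, hRval]
    linarith
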